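/- arXiv:1109.2915 — 3 statements merged into one kernel-verified Lean document; each statement's English description precedes it below -/
import Mathlib

section
/- Let k be an algebraically closed field, A a finite-dimensional k-algebra, θ an integral weight, and M a θ-stable A-module. Then every nonzero endomorphism of M is an isomorphism; consequently End_A(M) is a division ring, and since k is algebraically closed and M finite-dimensional, End_A(M) ≅ k. -/
open Module

/-! Setup: `A = kQ/I` is a (basic, finite-dimensional) algebra over the field `k`,
with complete system of orthogonal idempotents `e i` indexed by the (finite) vertex
set `ι = Q₀`.  For a finite-dimensional `A`-module `M`, its dimension vector has
`i`-th entry `dim_k (e i • M)`, and an integral weight `θ : ι → ℤ` evaluates on it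
as `θ(dim M) = ∑ i, θ i * dim_k (e i • M)`; this is `thetaDim` below. -/

/-- The `k`-linear endomorphism of `M` given by the action of `a : A`. -/
noncomputable def smulMap (k A : Type) [CommSemiring k] [Ring A] [Algebra k A] (a : A)
    (M : Type) [AddCommGroup M] [Module k M] [Module A M] [IsScalarTower k A M] :
    M →ₗ[k] M where
  toFun m := a • m
  map_add' := smul_add a
  map_smul' c m := smul_comm a c m

/-- `θ(dim M)`: the weight `θ` evaluated at the dimension vector of `M`. -/
noncomputable def thetaDim (k A ι : Type) [Field k] [Ring A] [Algebra k A] [Fintype ι]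
    (θ : ι → ℤ) (e : ι → A) (M : Type) [AddCommGroup M] [Module k M]
    [Module A M] [IsScalarTower k A M] : ℤ :=
  ∑ i, θ i * (finrank k (LinearMap.range (smulMap k A (e i) M)) : ℤ)

/-- `M` is `θ`-semi-stable: `θ(dim M) = 0` and `θ(dim M') ≤ 0` for all submodules. -/
noncomputable def IsSemistable (k A ι : Type) [Field k] [Ring A] [Algebra k A] [Fintype ι]
    (θ : ι → ℤ) (e : ι → A) (M : Type) [AddCommGroup M] [Module k M]
    [Module A M] [IsScalarTower k A M] : Prop :=
  thetaDim k A ι θ e M = 0 ∧ ∀ N : Submodule A M, thetaDim k A ι θ e ↥N ≤ 0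

/-- `M` is `θ`-stable: `M ≠ 0`, `θ(dim M) = 0` and `θ(dim M') < 0` for all proper
nonzero submodules. -/
noncomputable def IsStable (k A ι : Type) [Field k] [Ring A] [Algebra k A] [Fintype ι]
    (θ : ι → ℤ) (e : ι → A) (M : Type) [AddCommGroup M] [Module k M]
    [Module A M] [IsScalarTower k A M] : Prop :=
  Nontrivial M ∧ thetaDim k A ι θ e M = 0 ∧
    ∀ N : Submodule A M, N ≠ ⊥ → N ≠ ⊤ → thetaDim k A ι θ e ↥N < 0

section Aux

variable (k A : Type) [Field k] [Ring A] [Algebra k A]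
  (M : Type) [AddCommGroup M] [Module k M] [Module A M] [IsScalarTower k A M]

/-- The dimension of the `a`-image of a submodule, computed inside `M`. -/
lemma aux_finrank_sub (a : A) (N : Submodule A M) :
    finrank k ↥(LinearMap.range (smulMap k A a ↥N)) =
      finrank k ↥(Submodule.map (smulMap k A a M) (N.restrictScalars k)) := by
  have h : Submodule.map (N.subtype.restrictScalars k) (LinearMap.range (smulMap k A a ↥N)) =
      Submodule.map (smulMap k A a M) (N.restrictScalars k) := by
    ext x
    simp only [Submodule.mem_map, LinearMap.mem_range, LinearMap.coe_restrictScalars,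
      Submodule.coe_subtype, Submodule.restrictScalars_mem]
    constructor
    · rintro ⟨y, ⟨n, rfl⟩, rfl⟩
      exact ⟨n, n.2, rfl⟩
    · rintro ⟨m, hm, rfl⟩
      exact ⟨smulMap k A a (↥N) ⟨m, hm⟩, ⟨⟨m, hm⟩, rfl⟩, rfl⟩
  rw [← h]
  exact (Submodule.equivMapOfInjective _ (Subtype.val_injective) _).finrank_eq

variable [FiniteDimensional k M]

/-- Rank–nullity for the `i`-th component of an `A`-linear endomorphism. -/
lemma aux_rank_nullity (a : A) (ha : IsIdempotentElem a) (φ : M →ₗ[A] M) :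
    finrank k ↥(Submodule.map (smulMap k A a M) ((LinearMap.range φ).restrictScalars k)) +
    finrank k ↥(Submodule.map (smulMap k A a M) ((LinearMap.ker φ).restrictScalars k)) =
      finrank k ↥(LinearMap.range (smulMap k A a M)) := by
  set f := smulMap k A a M with hf
  set g := (φ.restrictScalars k).comp (LinearMap.range f).subtype with hg
  have hrank := LinearMap.finrank_range_add_finrank_ker g
  have hrange : LinearMap.range g = Submodule.map f ((LinearMap.range φ).restrictScalars k) := by
    ext x
    simp only [hg, LinearMap.range_comp, Submodule.range_subtype, Submodule.mem_map,
      LinearMap.mem_range, LinearMap.coe_restrictScalars, Submodule.restrictScalars_mem]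
    constructor
    · rintro ⟨y, ⟨m, rfl⟩, rfl⟩
      exact ⟨φ m, ⟨m, rfl⟩, by simp [hf, smulMap, map_smul]⟩
    · rintro ⟨y, ⟨m, rfl⟩, rfl⟩
      exact ⟨a • m, ⟨m, rfl⟩, by simp [hf, smulMap, map_smul]⟩
  have hker : finrank k ↥(LinearMap.ker g) =
      finrank k ↥(Submodule.map f ((LinearMap.ker φ).restrictScalars k)) := by
    have h1 : Submodule.map (LinearMap.range f).subtype (LinearMap.ker g) =
        Submodule.map f ((LinearMap.ker φ).restrictScalars k) := by
      ext x
      simp only [Submodule.mem_map, LinearMap.mem_ker, LinearMap.mem_range,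
        Submodule.coe_subtype, LinearMap.coe_restrictScalars, Submodule.restrictScalars_mem,
        hg, LinearMap.comp_apply]
      constructor
      · rintro ⟨⟨y, m, rfl⟩, hy, rfl⟩
        refine ⟨a • m, hy, ?_⟩
        show a • a • m = a • m
        rw [smul_smul, ha]
      · rintro ⟨m, hm, rfl⟩
        refine ⟨⟨f m, m, rfl⟩, ?_, rfl⟩
        show φ (a • m) = 0
        rw [map_smul, hm, smul_zero]
    rw [← h1]
    exact (Submodule.equivMapOfInjective _ (Subtype.val_injective) _).finrank_eq
  rw [← hrange, ← hker, hrank]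

variable (ι : Type) [Fintype ι] (θ : ι → ℤ) (e : ι → A)

/-- `thetaDim` of a submodule, expressed via images inside `M`. -/
lemma aux_thetaDim_sub (N : Submodule A M) :
    thetaDim k A ι θ e ↥N =
      ∑ i, θ i *
        (finrank k ↥(Submodule.map (smulMap k A (e i) M) (N.restrictScalars k)) : ℤ) := by
  unfold thetaDim
  refine Finset.sum_congr rfl fun i _ => ?_
  rw [aux_finrank_sub]

lemma aux_thetaDim_top : thetaDim k A ι θ e ↥(⊤ : Submodule A M) = thetaDim k A ι θ e M := by
  rw [aux_thetaDim_sub]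
  unfold thetaDim
  refine Finset.sum_congr rfl fun i _ => ?_
  congr 1
  rw [Submodule.restrictScalars_top, Submodule.map_top]

lemma aux_thetaDim_add (he : ∀ i, IsIdempotentElem (e i)) (φ : M →ₗ[A] M) :
    thetaDim k A ι θ e ↥(LinearMap.range φ) + thetaDim k A ι θ e ↥(LinearMap.ker φ) =
      thetaDim k A ι θ e M := by
  rw [aux_thetaDim_sub, aux_thetaDim_sub, ← Finset.sum_add_distrib]
  unfold thetaDim
  refine Finset.sum_congr rfl fun i _ => ?_
  rw [← mul_add, ← Nat.cast_add, aux_rank_nullity k A M (e i) (he i) φ]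

end Aux

/-- over an algebraically closed field, every nonzero endomorphism of a
`θ`-stable module `M` is an isomorphism, and `End_A(M) ≅ k`: every endomorphism is a
scalar. -/
theorem stmt_5 (k A ι : Type) [Field k] [Ring A] [Algebra k A] [FiniteDimensional k A]
    [Fintype ι] (θ : ι → ℤ) (e : ι → A)
    (he : ∀ i, IsIdempotentElem (e i))
    (horth : Pairwise fun i j => e i * e j = 0)
    (hsum : ∑ i, e i = 1)
    [IsAlgClosed k]
    (M : Type) [AddCommGroup M] [Module k M] [Module A M] [IsScalarTower k A M] [FiniteDimensional k M]
    (hM : IsStable k A ι θ e M) :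
    (∀ φ : M →ₗ[A] M, φ ≠ 0 → Function.Bijective φ) ∧
    (∀ φ : M →ₗ[A] M, ∃ c : k, ∀ m : M, φ m = c • m) := by
  obtain ⟨hnt, hzero, hstab⟩ := hM
  have part1 : ∀ φ : M →ₗ[A] M, φ ≠ 0 → Function.Bijective φ := by
    intro φ hφ
    have hker_ne_top : LinearMap.ker φ ≠ ⊤ := by
      intro h
      exact hφ (LinearMap.ker_eq_top.mp h)
    have hrange_ne_bot : LinearMap.range φ ≠ ⊥ := by
      intro h
      exact hφ (LinearMap.range_eq_bot.mp h)
    by_cases hk : LinearMap.ker φ = ⊥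
    · have hinj : Function.Injective φ := LinearMap.ker_eq_bot.mp hk
      refine ⟨hinj, ?_⟩
      have : Function.Injective (φ.restrictScalars k) := hinj
      have hsurj := (LinearMap.injective_iff_surjective (f := φ.restrictScalars k)).mp this
      exact hsurj
    · exfalso
      have hker_lt : thetaDim k A ι θ e ↥(LinearMap.ker φ) < 0 := hstab _ hk hker_ne_top
      have hrange_le : thetaDim k A ι θ e ↥(LinearMap.range φ) ≤ 0 := by
        by_cases hr : LinearMap.range φ = ⊤
        · rw [hr, aux_thetaDim_top, hzero]
        · exact le_of_lt (hstab _ hrange_ne_bot hr)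
      have hadd := aux_thetaDim_add k A M ι θ e he φ
      omega
  refine ⟨part1, ?_⟩
  intro φ
  haveI : Nontrivial M := hnt
  obtain ⟨c, hc⟩ := Module.End.exists_eigenvalue (φ.restrictScalars k : Module.End k M)
  obtain ⟨v, hv⟩ := hc.exists_hasEigenvector
  have hv0 : v ≠ 0 := hv.right
  have hφv : φ v = c • v := hv.apply_eq_smul
  set ψ : M →ₗ[A] M :=
    { toFun := fun m => φ m - c • m
      map_add' := fun x y => by simp [map_add, smul_add]; abel
      map_smul' := fun a m => by
        simp only [map_smul, RingHom.id_apply, smul_sub]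
        rw [smul_comm] } with hψ
  have hψv : ψ v = 0 := by
    simp [hψ, hφv]
  have hψ0 : ψ = 0 := by
    by_contra h0
    have hbij := part1 ψ h0
    exact hv0 (hbij.injective (by simp [hψv]))
  refine ⟨c, fun m => ?_⟩
  have := congrArg (fun f : M →ₗ[A] M => f m) hψ0
  simpa [hψ, sub_eq_zero] using this
end

section
/- Let Q be a finite quiver without oriented cycles and let V, W be finite-dimensional representations of Q over a field k. Then ⟨dim V, dim W⟩ = dim_k Hom_Q(V, W) − dim_k Ext^1_Q(V, W), where ⟨d, e⟩ = Σ_{i∈Q_0} d(i)e(i) − Σ_{a∈Q_1} d(ta)e(ha). -/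
open Module

/-- The standard map `⊕_{i∈Q₀} Hom_k(V i, W i) → ⊕_{a∈Q₁} Hom_k(V (t a), W (h a))`,
`φ ↦ (φ (h a) ∘ V a − W a ∘ φ (t a))_a`, whose kernel is `Hom_Q(V, W)` and whose
cokernel is `Ext¹_Q(V, W)`. -/
noncomputable def quiverStdMap (k : Type) [Field k] (V E : Type) (t h : E → V)
    (Vr Wr : V → Type)
    [∀ i, AddCommGroup (Vr i)] [∀ i, Module k (Vr i)]
    [∀ i, AddCommGroup (Wr i)] [∀ i, Module k (Wr i)]
    (Vm : (a : E) → (Vr (t a) →ₗ[k] Vr (h a)))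
    (Wm : (a : E) → (Wr (t a) →ₗ[k] Wr (h a))) :
    ((i : V) → (Vr i →ₗ[k] Wr i)) →ₗ[k] ((a : E) → (Vr (t a) →ₗ[k] Wr (h a))) where
  toFun φ a := (φ (h a)) ∘ₗ (Vm a) - (Wm a) ∘ₗ (φ (t a))
  map_add' φ ψ := by
    funext a
    simp only [Pi.add_apply, LinearMap.add_comp, LinearMap.comp_add]
    abel
  map_smul' c φ := by
    funext a
    simp only [Pi.smul_apply, LinearMap.smul_comp, LinearMap.comp_smul, RingHom.id_apply,
      smul_sub]

/-- for finite-dimensional representations `V`, `W` of a finite quiver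
`Q` without oriented cycles, `⟨dim V, dim W⟩ = dim_k Hom_Q(V,W) − dim_k Ext¹_Q(V,W)`,
where `Hom_Q(V,W)` is the kernel and `Ext¹_Q(V,W)` the cokernel of the standard map. -/
theorem stmt_11 (k : Type) [Field k] (V E : Type) [Fintype V] [Fintype E] (t h : E → V)
    (hacyclic : Irreflexive (Relation.TransGen fun i j : V => ∃ a : E, t a = i ∧ h a = j))
    (Vr Wr : V → Type)
    [∀ i, AddCommGroup (Vr i)] [∀ i, Module k (Vr i)] [∀ i, FiniteDimensional k (Vr i)]
    [∀ i, AddCommGroup (Wr i)] [∀ i, Module k (Wr i)] [∀ i, FiniteDimensional k (Wr i)]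
    (Vm : (a : E) → (Vr (t a) →ₗ[k] Vr (h a)))
    (Wm : (a : E) → (Wr (t a) →ₗ[k] Wr (h a))) :
    (∑ i, (finrank k (Vr i) : ℤ) * (finrank k (Wr i) : ℤ))
      - ∑ a, (finrank k (Vr (t a)) : ℤ) * (finrank k (Wr (h a)) : ℤ)
    = (finrank k (LinearMap.ker (quiverStdMap k V E t h Vr Wr Vm Wm)) : ℤ)
      - (finrank k
          (((a : E) → (Vr (t a) →ₗ[k] Wr (h a))) ⧸
            LinearMap.range (quiverStdMap k V E t h Vr Wr Vm Wm)) : ℤ) := by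
  set f := quiverStdMap k V E t h Vr Wr Vm Wm
  have h1 : finrank k (((a : E) → (Vr (t a) →ₗ[k] Wr (h a))) ⧸ LinearMap.range f) + finrank k (LinearMap.range f) = finrank k ((a : E) → (Vr (t a) →ₗ[k] Wr (h a))) := Submodule.finrank_quotient_add_finrank _
  have h2 : finrank k (LinearMap.range f) + finrank k (LinearMap.ker f) = finrank k ((i : V) → (Vr i →ₗ[k] Wr i)) := LinearMap.finrank_range_add_finrank_ker f
  have hd : finrank k ((i : V) → (Vr i →ₗ[k] Wr i)) = ∑ i, finrank k (Vr i) * finrank k (Wr i) := by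
    rw [Module.finrank_pi_fintype]
    exact Finset.sum_congr rfl fun i _ => Module.finrank_linearMap k k _ _
  have hc : finrank k ((a : E) → (Vr (t a) →ₗ[k] Wr (h a))) = ∑ a, finrank k (Vr (t a)) * finrank k (Wr (h a)) := by
    rw [Module.finrank_pi_fintype]
    exact Finset.sum_congr rfl fun a _ => Module.finrank_linearMap k k _ _
  have := congrArg (Nat.cast (R := ℤ)) h1
  have := congrArg (Nat.cast (R := ℤ)) h2
  push_cast [hd, hc] at *
  linarith
end

section
/- Let A be a finite-dimensional algebra, T a tilting A-module of projective dimension ≤ 1, B = End_A(T)^{op}, and θ an integral weight of A satisfying: mod(A)^{ss}_θ ⊆ T(T) and θ(dim X) < 0 for every nonzero A-module X with Hom_A(T, X) = 0. Let u : K_0(A) → K_0(B) be the isometry u(dim M) = dim Hom_A(T,M) − dim Ext^1_A(T,M), and set θ' = θ ∘ u^{-1}. Then for every θ-semi-stable A-module M, the B-module Hom_A(T, M) is θ'-semi-stable. -/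
open Module

/-- `Ext¹_A(X, Y) = 0`: every short exact sequence `0 → Y → E → X → 0` splits. -/
def Ext1Vanishes (A : Type) [Ring A] (X Y : Type) [AddCommGroup X] [Module A X]
    [AddCommGroup Y] [Module A Y] : Prop :=
  ∀ (E : Type) [AddCommGroup E] [Module A E] (f : Y →ₗ[A] E) (g : E →ₗ[A] X),
    Function.Injective f → Function.Surjective g → Function.Exact f g →
      ∃ s : X →ₗ[A] E, g ∘ₗ s = LinearMap.id

/-- `X` belongs to `add T`: it is a direct summand of some `T^n`. -/
def IsSummandOfPower (A : Type) [Ring A] (T X : Type) [AddCommGroup T] [Module A T]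
    [AddCommGroup X] [Module A X] : Prop :=
  ∃ (n : ℕ) (s : X →ₗ[A] (Fin n → T)) (p : (Fin n → T) →ₗ[A] X), p ∘ₗ s = LinearMap.id

/-- `T` is a tilting `A`-module (of projective dimension at most one):
(1) there is a short exact sequence `0 → P₁ → P₀ → T → 0` with `P₀, P₁` projective;
(2) `Ext¹_A(T, T) = 0`;
(3) there is a short exact sequence `0 → A → T⁰ → T¹ → 0` with `T⁰, T¹ ∈ add T`. -/
def IsTiltingModule (A : Type) [Ring A] (T : Type) [AddCommGroup T] [Module A T] : Prop :=
  (∃ (P₀ P₁ : ModuleCat.{0} A) (f : ↥P₁ →ₗ[A] ↥P₀) (g : ↥P₀ →ₗ[A] T),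
      Module.Projective A P₀ ∧ Module.Projective A P₁ ∧
      Function.Injective f ∧ Function.Surjective g ∧ Function.Exact f g) ∧
  Ext1Vanishes A T T ∧
  (∃ (T₀ T₁ : ModuleCat.{0} A) (f : A →ₗ[A] ↥T₀) (g : ↥T₀ →ₗ[A] ↥T₁),
      IsSummandOfPower A T T₀ ∧ IsSummandOfPower A T T₁ ∧
      Function.Injective f ∧ Function.Surjective g ∧ Function.Exact f g)

section Instances

variable {k A : Type} [Field k] [Ring A] [Algebra k A]
variable {T : Type} [AddCommGroup T] [Module k T] [Module A T] [IsScalarTower k A T]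
variable {M : Type} [AddCommGroup M] [Module A M]

/-- `Hom_A(T, M)` is a left module over `B = End_A(T)^op` via `b • f = f ∘ b`. -/
instance homEndOpModule : Module (Module.End A T)ᵐᵒᵖ (T →ₗ[A] M) where
  smul b f := f ∘ₗ b.unop
  one_smul f := LinearMap.comp_id f
  mul_smul b c f := by
    show f ∘ₗ (c.unop * b.unop) = (f ∘ₗ c.unop) ∘ₗ b.unop
    rfl
  smul_zero b := LinearMap.zero_comp b.unop
  smul_add b f g := LinearMap.add_comp _ _ _
  add_smul b c f := LinearMap.comp_add _ _ _
  zero_smul f := LinearMap.comp_zero f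

instance homEndOpTower [Module k M] [IsScalarTower k A M] :
    IsScalarTower k (Module.End A T)ᵐᵒᵖ (T →ₗ[A] M) where
  smul_assoc c b f := by
    show f ∘ₗ (c • b).unop = c • (f ∘ₗ b.unop)
    ext t
    simp

end Instances


section Theta
variable {k R : Type} [Field k] [Ring R] [Algebra k R]
variable {M N : Type} [AddCommGroup M] [Module k M] [Module R M] [IsScalarTower k R M]
variable [AddCommGroup N] [Module k N] [Module R N] [IsScalarTower k R N]

lemma smulMap_comm (a : R) (φ : M →ₗ[R] N) :
    (φ.restrictScalars k) ∘ₗ smulMap k R a M = smulMap k R a N ∘ₗ (φ.restrictScalars k) := by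
  ext m; simp [smulMap]

lemma range_smulMap_congr (a : R) (φ : M ≃ₗ[R] N) :
    LinearMap.range (smulMap k R a N) =
      Submodule.map ((φ.restrictScalars k : M ≃ₗ[k] N) : M →ₗ[k] N) (LinearMap.range (smulMap k R a M)) := by
  have h := smulMap_comm (k := k) a (φ : M →ₗ[R] N)
  ext x
  constructor
  · rintro ⟨n, rfl⟩
    exact ⟨a • φ.symm n, ⟨φ.symm n, rfl⟩, by
      show φ (a • φ.symm n) = a • n
      rw [map_smul, φ.apply_symm_apply]⟩
  · rintro ⟨y, ⟨m, rfl⟩, rfl⟩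
    exact ⟨φ m, by show a • φ m = φ (a • m); rw [map_smul]⟩

lemma thetaDim_congr {ι : Type} [Fintype ι] (θ : ι → ℤ) (e : ι → R) (φ : M ≃ₗ[R] N) :
    thetaDim k R ι θ e M = thetaDim k R ι θ e N := by
  unfold thetaDim
  congr 1; ext i
  congr 2
  rw [range_smulMap_congr (k := k) (e i) φ]
  exact (LinearEquiv.finrank_map_eq (φ.restrictScalars k) _).symm

lemma thetaDim_subsingleton {ι : Type} [Fintype ι] (θ : ι → ℤ) (e : ι → R)
    [Subsingleton M] : thetaDim k R ι θ e M = 0 := by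
  unfold thetaDim
  apply Finset.sum_eq_zero
  intro i _
  have : finrank k (LinearMap.range (smulMap k R (e i) M)) = 0 :=
    finrank_zero_of_subsingleton
  rw [this]; ring
end Theta


section Add
variable {k R : Type} [Field k] [Ring R] [Algebra k R]
variable {M : Type} [AddCommGroup M] [Module k M] [Module R M] [IsScalarTower k R M]

lemma mem_range_smulMap {a : R} (ha : IsIdempotentElem a) {m : M} :
    m ∈ LinearMap.range (smulMap k R a M) ↔ a • m = m := by
  constructor
  · rintro ⟨x, rfl⟩
    show a • a • x = a • x
    rw [← mul_smul, ha.eq]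
  · intro h; exact ⟨m, h⟩

lemma finrank_smul_additive (a : R) (ha : IsIdempotentElem a)
    [FiniteDimensional k M] (N : Submodule R M) :
    finrank k (LinearMap.range (smulMap k R a M)) =
      finrank k (LinearMap.range (smulMap k R a ↥N)) +
      finrank k (LinearMap.range (smulMap k R a (M ⧸ N))) := by
  set V := LinearMap.range (smulMap k R a M) with hV
  let ψ : ↥V →ₗ[k] M ⧸ N := (N.mkQ.restrictScalars k) ∘ₗ V.subtype
  have hrange : LinearMap.range ψ = LinearMap.range (smulMap k R a (M ⧸ N)) := by
    ext y
    constructor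
    · rintro ⟨⟨v, m, rfl⟩, rfl⟩
      refine ⟨N.mkQ m, ?_⟩
      show a • N.mkQ m = N.mkQ (a • m)
      simp
    · rintro ⟨x, rfl⟩
      obtain ⟨m, rfl⟩ := N.mkQ_surjective x
      refine ⟨⟨a • m, ⟨m, rfl⟩⟩, ?_⟩
      show N.mkQ (a • m) = a • N.mkQ m
      simp
  -- ker ψ ≃ range (smulMap on N)
  let χ : ↥(LinearMap.range (smulMap k R a ↥N)) →ₗ[k] ↥(LinearMap.ker ψ) :=
    { toFun := fun x => ⟨⟨(x : ↥N), by
        rcases x.2 with ⟨n, hn⟩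
        have : a • ((n : ↥N) : M) = ((x : ↥N) : M) := by
          rw [← hn]; rfl
        exact ⟨(n : M), this⟩⟩, by
        show N.mkQ ((x : ↥N) : M) = 0
        simp [Submodule.Quotient.mk_eq_zero, SetLike.coe_mem]⟩
      map_add' := fun x y => by ext; rfl
      map_smul' := fun c x => by ext; rfl }
  have hinj : Function.Injective χ := by
    intro x y h
    ext
    exact congrArg (fun z => ((z : ↥V) : M)) (congrArg Subtype.val h)
  have hsurj : Function.Surjective χ := by
    rintro ⟨⟨v, hvV⟩, hker⟩
    have hvN : v ∈ N := by
      have : N.mkQ v = 0 := hker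
      simpa [Submodule.Quotient.mk_eq_zero] using this
    have hav : a • v = v := (mem_range_smulMap ha).1 hvV
    refine ⟨⟨⟨v, hvN⟩, ⟨⟨v, hvN⟩, ?_⟩⟩, ?_⟩
    · ext; exact hav
    · ext; rfl
  have hker : finrank k ↥(LinearMap.ker ψ) =
      finrank k ↥(LinearMap.range (smulMap k R a ↥N)) :=
    (LinearEquiv.ofBijective χ ⟨hinj, hsurj⟩).finrank_eq.symm
  have := LinearMap.finrank_range_add_finrank_ker ψ
  rw [hrange, hker] at this
  omega

lemma thetaDim_additive {ι : Type} [Fintype ι] (θ : ι → ℤ) (e : ι → R)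
    (he : ∀ i, IsIdempotentElem (e i)) [FiniteDimensional k M] (N : Submodule R M) :
    thetaDim k R ι θ e M = thetaDim k R ι θ e ↥N + thetaDim k R ι θ e (M ⧸ N) := by
  unfold thetaDim
  rw [← Finset.sum_add_distrib]
  congr 1; ext i
  rw [finrank_smul_additive (e i) (he i) N]
  push_cast
  ring
end Add


section Ext1
variable {A : Type} [Ring A]
variable {T : Type} [AddCommGroup T] [Module A T]




lemma ext1_of_equiv {Y Z : Type} [AddCommGroup Y] [Module A Y] [AddCommGroup Z] [Module A Z]
    (e : Y ≃ₗ[A] Z) (h : Ext1Vanishes A T Y) : Ext1Vanishes A T Z := by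
  intro E _ _ f g hf hg hfg
  refine h E (f ∘ₗ (e : Y →ₗ[A] Z)) g (hf.comp e.injective) hg ?_
  intro x
  rw [hfg x]
  constructor
  · rintro ⟨y, rfl⟩; exact ⟨e.symm y, by simp⟩
  · rintro ⟨y, rfl⟩; exact ⟨e y, rfl⟩

lemma ext1_subsingleton {Y : Type} [AddCommGroup Y] [Module A Y] [Subsingleton Y] :
    Ext1Vanishes A T Y := by
  intro E _ _ f g hf hg hfg
  have hginj : Function.Injective g := by
    rw [← LinearMap.ker_eq_bot]
    ext x
    simp only [LinearMap.mem_ker, Submodule.mem_bot]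
    constructor
    · intro hx
      rcases (hfg x).1 hx with ⟨y, rfl⟩
      rw [Subsingleton.elim y 0, map_zero]
    · rintro rfl; simp
  refine ⟨(LinearEquiv.ofBijective g ⟨hginj, hg⟩).symm.toLinearMap, ?_⟩
  ext x
  exact (LinearEquiv.ofBijective g ⟨hginj, hg⟩).apply_symm_apply x

lemma ext1_prod {Y₁ Y₂ : Type} [AddCommGroup Y₁] [Module A Y₁] [AddCommGroup Y₂] [Module A Y₂]
    (h₁ : Ext1Vanishes A T Y₁) (h₂ : Ext1Vanishes A T Y₂) : Ext1Vanishes A T (Y₁ × Y₂) := by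
  intro E _ _ f g hf hg hfg
  set S₂ : Submodule A E := LinearMap.range (f ∘ₗ LinearMap.inr A Y₁ Y₂) with hS₂
  have hS₂ker : S₂ ≤ LinearMap.ker g := by
    rintro x ⟨y, rfl⟩
    simp only [LinearMap.mem_ker]
    exact (hfg _).2 ⟨_, rfl⟩
  let g' : (E ⧸ S₂) →ₗ[A] T := S₂.liftQ g hS₂ker
  let f' : Y₁ →ₗ[A] (E ⧸ S₂) := S₂.mkQ ∘ₗ f ∘ₗ LinearMap.inl A Y₁ Y₂
  have hf' : Function.Injective f' := by
    intro a b hab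
    have hab' : Submodule.Quotient.mk (p := S₂) (f (a, 0)) = Submodule.Quotient.mk (f (b, 0)) := hab
    have h0 : f (a, 0) - f (b, 0) ∈ S₂ := (Submodule.Quotient.eq S₂).1 hab'
    rw [← map_sub] at h0
    rcases h0 with ⟨y, hy⟩
    have := hf hy
    have h1 : (0 : Y₁) = a - b := congrArg Prod.fst this
    have : a - b = 0 := h1.symm
    rwa [sub_eq_zero] at this
  have hg' : Function.Surjective g' := by
    intro t
    rcases hg t with ⟨e, rfl⟩
    exact ⟨S₂.mkQ e, rfl⟩
  have hfg' : Function.Exact f' g' := by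
    intro x
    constructor
    · intro hx
      obtain ⟨e, rfl⟩ := S₂.mkQ_surjective x
      have : g e = 0 := hx
      rcases (hfg e).1 this with ⟨⟨y₁, y₂⟩, rfl⟩
      refine ⟨y₁, ?_⟩
      show S₂.mkQ (f (y₁, 0)) = S₂.mkQ (f (y₁, y₂))
      rw [← sub_eq_zero, ← map_sub, ← map_sub]
      rw [Submodule.mkQ_apply, Submodule.Quotient.mk_eq_zero]
      exact ⟨-y₂, by simp⟩
    · rintro ⟨y, rfl⟩
      show g (f (y, 0)) = 0
      exact (hfg _).2 ⟨_, rfl⟩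
  obtain ⟨s', hs'⟩ := h₁ (E ⧸ S₂) f' g' hf' hg' hfg'
  -- pullback of s' along mkQ
  set q : E →ₗ[A] (E ⧸ S₂) := S₂.mkQ
  set Et : Submodule A (E × T) :=
    LinearMap.ker ((q ∘ₗ LinearMap.fst A E T) - (s' ∘ₗ LinearMap.snd A E T)) with hEt
  let f₂ : Y₂ →ₗ[A] ↥Et := LinearMap.codRestrict Et
    ((LinearMap.inl A E T) ∘ₗ f ∘ₗ LinearMap.inr A Y₁ Y₂)
    (fun y => by
      simp only [hEt, LinearMap.mem_ker, LinearMap.sub_apply, LinearMap.comp_apply,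
        LinearMap.fst_apply, LinearMap.snd_apply, LinearMap.inl_apply, map_zero, sub_zero]
      show S₂.mkQ _ = 0
      rw [Submodule.mkQ_apply, Submodule.Quotient.mk_eq_zero]
      exact ⟨y, rfl⟩)
  let g₂ : ↥Et →ₗ[A] T := (LinearMap.snd A E T) ∘ₗ Et.subtype
  have hf₂ : Function.Injective f₂ := by
    intro a b hab
    have h := Subtype.ext_iff.1 hab
    have h1 : ((f (0, a) : E), (0 : T)) = (f (0, b), 0) := h
    have h2 : f (0, a) = f (0, b) := congrArg Prod.fst h1
    have := hf h2
    simpa using congrArg Prod.snd this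
  have hg₂ : Function.Surjective g₂ := by
    intro t
    obtain ⟨e, he⟩ := S₂.mkQ_surjective (s' t)
    refine ⟨⟨(e, t), ?_⟩, rfl⟩
    simp only [hEt, LinearMap.mem_ker, LinearMap.sub_apply, LinearMap.comp_apply,
      LinearMap.fst_apply, LinearMap.snd_apply, sub_eq_zero]
    exact he
  have hfg₂ : Function.Exact f₂ g₂ := by
    intro x
    constructor
    · intro hx
      obtain ⟨⟨e, t⟩, hmem⟩ := x
      have ht : t = 0 := hx
      subst ht
      have hq : q e = 0 := by
        have := hmem
        simp only [hEt, LinearMap.mem_ker, LinearMap.sub_apply, LinearMap.comp_apply,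
          LinearMap.fst_apply, LinearMap.snd_apply, map_zero, sub_zero] at this
        exact this
      rw [Submodule.mkQ_apply, Submodule.Quotient.mk_eq_zero] at hq
      rcases hq with ⟨y, hy⟩
      refine ⟨y, Subtype.ext ?_⟩
      show ((f (0, y) : E), (0 : T)) = (e, 0)
      exact congrArg (fun z => (z, (0 : T))) hy
    · rintro ⟨y, rfl⟩
      rfl
  obtain ⟨s₂, hs₂⟩ := h₂ ↥Et f₂ g₂ hf₂ hg₂ hfg₂
  refine ⟨(LinearMap.fst A E T) ∘ₗ Et.subtype ∘ₗ s₂, ?_⟩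
  ext t
  -- g (s₂ t).1 = t
  have hmem := (s₂ t).2
  simp only [hEt, LinearMap.mem_ker, LinearMap.sub_apply, LinearMap.comp_apply,
    LinearMap.fst_apply, LinearMap.snd_apply, sub_eq_zero] at hmem
  have hsnd : ((s₂ t : E × T)).2 = t := congrFun (congrArg (fun h => h.toFun) hs₂) t
  have : g ((s₂ t : E × T)).1 = g' (q ((s₂ t : E × T)).1) := rfl
  simp only [LinearMap.comp_apply, LinearMap.id_apply, LinearMap.fst_apply,
    Submodule.subtype_apply]
  rw [this, hmem, hsnd]
  exact congrFun (congrArg (fun h => h.toFun) hs') t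





noncomputable def piSuccLinearEquiv (A : Type) [Ring A] (T : Type) [AddCommGroup T]
    [Module A T] (n : ℕ) : (Fin (n + 1) → T) ≃ₗ[A] T × (Fin n → T) where
  toFun f := (f 0, fun i => f i.succ)
  invFun p := Fin.cons p.1 p.2
  map_add' f g := rfl
  map_smul' a f := rfl
  left_inv f := by
    funext i
    induction i using Fin.cases <;> simp
  right_inv p := by
    ext i <;> simp

lemma ext1_quot {P₀ P₁ : Type} [AddCommGroup P₀] [Module A P₀] [AddCommGroup P₁] [Module A P₁]
    [Module.Projective A P₀] [Module.Projective A P₁]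
    (ι₀ : P₁ →ₗ[A] P₀) (p₀ : P₀ →ₗ[A] T) (hι : Function.Injective ι₀)
    (hp₀ : Function.Surjective p₀) (hres : Function.Exact ι₀ p₀)
    {Y Z : Type} [AddCommGroup Y] [Module A Y] [AddCommGroup Z] [Module A Z]
    (hY : Ext1Vanishes A T Y) (q : Y →ₗ[A] Z) (hq : Function.Surjective q) :
    Ext1Vanishes A T Z := by
  intro E _ _ f g hf hg hfg
  obtain ⟨l, hl⟩ := Module.projective_lifting_property g p₀ hg
  -- α : P₁ → Z with f ∘ α = l ∘ ι₀
  have hmem : ∀ x : P₁, l (ι₀ x) ∈ LinearMap.range f := by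
    intro x
    have h0 : g (l (ι₀ x)) = 0 := by
      have : g (l (ι₀ x)) = p₀ (ι₀ x) := by rw [← LinearMap.comp_apply, hl]
      rw [this]
      exact (hres (ι₀ x)).2 ⟨x, rfl⟩
    rcases (hfg _).1 h0 with ⟨y, hy⟩
    exact ⟨y, hy⟩
  let ef : Z ≃ₗ[A] LinearMap.range f := LinearEquiv.ofInjective f hf
  let α : P₁ →ₗ[A] Z :=
    (ef.symm : ↥(LinearMap.range f) →ₗ[A] Z) ∘ₗ
      LinearMap.codRestrict (LinearMap.range f) (l ∘ₗ ι₀) hmem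
  have hα : ∀ x, f (α x) = l (ι₀ x) := by
    intro x
    show f (ef.symm ⟨l (ι₀ x), hmem x⟩) = l (ι₀ x)
    exact LinearEquiv.ofInjective_symm_apply (f := f) (h := hf) ⟨l (ι₀ x), hmem x⟩
  obtain ⟨abar, habar⟩ := Module.projective_lifting_property q α hq
  set γ : P₁ →ₗ[A] Y × P₀ := LinearMap.prod abar (-ι₀) with hγ
  set G : Submodule A (Y × P₀) := LinearMap.range γ with hG
  let fY : Y →ₗ[A] (Y × P₀) ⧸ G := G.mkQ ∘ₗ LinearMap.inl A Y P₀
  have hker : G ≤ LinearMap.ker (p₀ ∘ₗ LinearMap.snd A Y P₀) := by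
    rintro x ⟨u, rfl⟩
    show p₀ (-ι₀ u) = 0
    rw [map_neg, neg_eq_zero]
    exact (hres (ι₀ u)).2 ⟨u, rfl⟩
  let gY : ((Y × P₀) ⧸ G) →ₗ[A] T := G.liftQ (p₀ ∘ₗ LinearMap.snd A Y P₀) hker
  have hfY : Function.Injective fY := by
    intro a b hab
    have hab' : Submodule.Quotient.mk (p := G) ((a : Y), (0 : P₀)) =
        Submodule.Quotient.mk ((b : Y), (0 : P₀)) := hab
    have h0 : ((a, (0 : P₀)) - (b, 0)) ∈ G := (Submodule.Quotient.eq G).1 hab'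
    rcases h0 with ⟨u, hu⟩
    have h1 : -ι₀ u = (0 : P₀) := by
      have := congrArg Prod.snd hu
      simpa [hγ] using this
    have hu0 : u = 0 := by
      apply hι
      rw [map_zero, ← neg_eq_zero]
      exact h1
    have h2 : abar u = a - b := by
      have := congrArg Prod.fst hu
      simpa [hγ] using this
    rw [hu0, map_zero] at h2
    have : a - b = 0 := h2.symm
    rwa [sub_eq_zero] at this
  have hgY : Function.Surjective gY := by
    intro t
    rcases hp₀ t with ⟨p, rfl⟩
    exact ⟨G.mkQ (0, p), rfl⟩
  have hfgY : Function.Exact fY gY := by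
    intro x
    constructor
    · intro hx
      obtain ⟨⟨y, p⟩, rfl⟩ := G.mkQ_surjective x
      have hp : p₀ p = 0 := hx
      rcases (hres p).1 hp with ⟨u, rfl⟩
      refine ⟨y + abar u, ?_⟩
      show G.mkQ (y + abar u, (0 : P₀)) = G.mkQ (y, ι₀ u)
      rw [Submodule.mkQ_apply, Submodule.mkQ_apply, Submodule.Quotient.eq]
      refine ⟨u, ?_⟩
      have hγu : γ u = (abar u, -ι₀ u) := rfl
      rw [hγu, Prod.mk_sub_mk]
      congr 1 <;> abel
    · rintro ⟨y, rfl⟩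
      show gY (G.mkQ (y, 0)) = 0
      show p₀ (0 : P₀) = 0
      simp
  obtain ⟨σ, hσ⟩ := hY ((Y × P₀) ⧸ G) fY gY hfY hgY hfgY
  -- the comparison map μ̄ : (Y × P₀) ⧸ G → E
  let μ : (Y × P₀) →ₗ[A] E := LinearMap.coprod (f ∘ₗ q) l
  have hμker : G ≤ LinearMap.ker μ := by
    rintro x ⟨u, rfl⟩
    show f (q (abar u)) + l (-ι₀ u) = 0
    have : q (abar u) = α u := by rw [← LinearMap.comp_apply, habar]
    rw [this, hα u, map_neg]
    abel
  let μbar : ((Y × P₀) ⧸ G) →ₗ[A] E := G.liftQ μ hμker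
  have hgμ : g ∘ₗ μbar = gY := by
    apply Submodule.linearMap_qext
    apply LinearMap.ext
    rintro ⟨y, p⟩
    show g (f (q y) + l p) = p₀ p
    have h1 : g (f (q y)) = 0 := (hfg _).2 ⟨_, rfl⟩
    have h2 : g (l p) = p₀ p := by rw [← LinearMap.comp_apply, hl]
    rw [map_add, h1, h2, zero_add]
  refine ⟨μbar ∘ₗ σ, ?_⟩
  rw [← LinearMap.comp_assoc, hgμ, hσ]


lemma ext1_pow (hTT : Ext1Vanishes A T T) : ∀ n, Ext1Vanishes A T (Fin n → T)
  | 0 => ext1_subsingleton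
  | (n+1) => ext1_of_equiv (piSuccLinearEquiv A T n).symm (ext1_prod hTT (ext1_pow hTT n))
end Ext1

section FD
variable {k R M : Type} [Field k] [Ring R] [Algebra k R]
variable [AddCommGroup M] [Module k M] [Module R M] [IsScalarTower k R M]

lemma fd_submodule [FiniteDimensional k M] (N : Submodule R M) : FiniteDimensional k ↥N :=
  FiniteDimensional.of_injective ((N.subtype).restrictScalars k)
    (by rw [LinearMap.coe_restrictScalars]; exact N.injective_subtype)

lemma fd_quotient [FiniteDimensional k M] (N : Submodule R M) : FiniteDimensional k (M ⧸ N) :=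
  Module.Finite.of_surjective (N.mkQ.restrictScalars k) N.mkQ_surjective

lemma fd_hom {A T W : Type} [Ring A] [Algebra k A] [AddCommGroup T] [Module k T] [Module A T]
    [IsScalarTower k A T] [AddCommGroup W] [Module k W] [Module A W] [IsScalarTower k A W]
    [FiniteDimensional k T] [FiniteDimensional k W] : FiniteDimensional k (T →ₗ[A] W) := by
  let Φ : (T →ₗ[A] W) →ₗ[k] (T →ₗ[k] W) :=
    { toFun := fun f => f.restrictScalars k
      map_add' := fun f g => rfl
      map_smul' := fun c f => rfl }
  exact FiniteDimensional.of_injective Φ (fun f g h => LinearMap.restrictScalars_injective k h)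
end FD


set_option maxHeartbeats 2000000 in
/-- `A` a finite-dimensional algebra, `T` a tilting `A`-module of
projective dimension `≤ 1`, `B = End_A(T)^op`, and `θ` an integral weight of `A`
(given by the idempotents `e` of `A`) such that all `θ`-semi-stable modules lie in
the torsion class `T(T) = {M : Ext¹_A(T,M) = 0}` and `θ(dim X) < 0` for every nonzero
module `X` in the torsion-free class `F(T) = {X : Hom_A(T,X) = 0}`.  Let
`θ' = θ ∘ u⁻¹` be the corresponding weight of `B`, where `u : K₀(A) → K₀(B)` is the
tilting isometry: concretely, `θ'` (a weight for the idempotents `e'` of `B`) is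
required to satisfy `θ'(dim Hom_A(T,M)) = θ(dim M)` for every finite-dimensional
module `M ∈ T(T)` (which characterizes `θ ∘ u⁻¹`).  Then for every `θ`-semi-stable
`A`-module `M`, the `B`-module `Hom_A(T, M)` is `θ'`-semi-stable. -/
theorem stmt_15 (k A ι ι' : Type) [Field k] [Ring A] [Algebra k A] [FiniteDimensional k A]
    [Fintype ι] [Fintype ι'] (θ : ι → ℤ) (e : ι → A)
    (he : ∀ i, IsIdempotentElem (e i))
    (horth : Pairwise fun i j => e i * e j = 0)
    (hsum : ∑ i, e i = 1)
    (T : Type) [AddCommGroup T] [Module k T] [Module A T] [IsScalarTower k A T]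
    [FiniteDimensional k T]
    (htilt : IsTiltingModule A T)
    (θ' : ι' → ℤ) (e' : ι' → (Module.End A T)ᵐᵒᵖ)
    (he' : ∀ i, IsIdempotentElem (e' i))
    (horth' : Pairwise fun i j => e' i * e' j = 0)
    (hsum' : ∑ i, e' i = 1)
    (hcompat : ∀ (M : Type) [AddCommGroup M] [Module k M] [Module A M]
        [IsScalarTower k A M] [FiniteDimensional k M], Ext1Vanishes A T M →
        thetaDim k (Module.End A T)ᵐᵒᵖ ι' θ' e' (T →ₗ[A] M) = thetaDim k A ι θ e M)
    (hsstorsion : ∀ (M : Type) [AddCommGroup M] [Module k M] [Module A M]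
        [IsScalarTower k A M] [FiniteDimensional k M],
        IsSemistable k A ι θ e M → Ext1Vanishes A T M)
    (hfneg : ∀ (X : Type) [AddCommGroup X] [Module k X] [Module A X]
        [IsScalarTower k A X] [FiniteDimensional k X], Nontrivial X →
        (∀ f : T →ₗ[A] X, f = 0) → thetaDim k A ι θ e X < 0)
    (M : Type) [AddCommGroup M] [Module k M] [Module A M] [IsScalarTower k A M]
    [FiniteDimensional k M]
    (hM : IsSemistable k A ι θ e M) :
    IsSemistable k (Module.End A T)ᵐᵒᵖ ι' θ' e' (T →ₗ[A] M) := by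
  classical
  obtain ⟨⟨P₀, P₁, ι₀, p₀, hP₀, hP₁, hι, hp₀, hres⟩, hTT, -⟩ := htilt
  haveI := hP₀
  haveI := hP₁
  haveI : FiniteDimensional k (T →ₗ[A] M) := fd_hom
  constructor
  · rw [hcompat M (hsstorsion M hM)]
    exact hM.1
  · intro N'
    haveI : FiniteDimensional k (Module.End A T) := fd_hom
    haveI : FiniteDimensional k (Module.End A T)ᵐᵒᵖ :=
      Module.Finite.equiv (MulOpposite.opLinearEquiv k : Module.End A T ≃ₗ[k] _)
    haveI : FiniteDimensional k ↥N' := fd_submodule N'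
    set n := finrank k ↥N' with hn
    let bN : Basis (Fin n) k ↥N' := Module.finBasis k ↥N'
    let π : (Fin n → (Module.End A T)ᵐᵒᵖ) →ₗ[(Module.End A T)ᵐᵒᵖ] ↥N' :=
      { toFun := fun b => ∑ j, b j • bN j
        map_add' := by
          intro b c
          rw [← Finset.sum_add_distrib]
          exact Finset.sum_congr rfl fun j _ => by rw [Pi.add_apply, add_smul]
        map_smul' := by
          intro c b
          show ∑ j, (c • b) j • bN j = c • ∑ j, b j • bN j
          rw [Finset.smul_sum]
          exact Finset.sum_congr rfl fun j _ => by
            show (c * b j) • bN j = c • (b j • bN j)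
            rw [mul_smul] }
    have hπsurj : Function.Surjective π := by
      intro x
      refine ⟨fun j => (bN.repr x j) • (1 : (Module.End A T)ᵐᵒᵖ), ?_⟩
      show ∑ j, ((bN.repr x j) • (1 : (Module.End A T)ᵐᵒᵖ)) • bN j = x
      calc ∑ j, ((bN.repr x j) • (1 : (Module.End A T)ᵐᵒᵖ)) • bN j
          = ∑ j, bN.repr x j • bN j :=
            Finset.sum_congr rfl fun j _ => by rw [smul_assoc, one_smul]
        _ = x := bN.sum_repr x
    set K := LinearMap.ker π with hKdef
    haveI : FiniteDimensional k ↥K := fd_submodule K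
    set m := finrank k ↥K with hm
    let bK : Basis (Fin m) k ↥K := Module.finBasis k ↥K
    let x : Fin m → (Fin n → (Module.End A T)ᵐᵒᵖ) := fun l => ((bK l : ↥K) : Fin n → (Module.End A T)ᵐᵒᵖ)
    let φ : (Fin m → T) →ₗ[A] (Fin n → T) :=
      { toFun := fun t j => ∑ l, ((x l j).unop) (t l)
        map_add' := by
          intro t s
          funext j
          show ∑ l, (x l j).unop (t l + s l) =
            (∑ l, (x l j).unop (t l)) + ∑ l, (x l j).unop (s l)
          rw [← Finset.sum_add_distrib]
          exact Finset.sum_congr rfl fun l _ => map_add _ _ _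
        map_smul' := by
          intro a t
          funext j
          show ∑ l, (x l j).unop (a • t l) = a • ∑ l, (x l j).unop (t l)
          rw [Finset.smul_sum]
          exact Finset.sum_congr rfl fun l _ => map_smul _ _ _ }
    set R := LinearMap.range φ with hRdef
    set W := (Fin n → T) ⧸ R with hWdef
    haveI : FiniteDimensional k W := fd_quotient R
    -- the evaluation map
    let cbar : (Fin n → T) →ₗ[A] M :=
      { toFun := fun t => ∑ j, ((bN j : ↥N') : T →ₗ[A] M) (t j)
        map_add' := by
          intro t s
          show ∑ j, ((bN j : ↥N') : T →ₗ[A] M) (t j + s j) =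
            (∑ j, ((bN j : ↥N') : T →ₗ[A] M) (t j)) + ∑ j, ((bN j : ↥N') : T →ₗ[A] M) (s j)
          rw [← Finset.sum_add_distrib]
          exact Finset.sum_congr rfl fun j _ => map_add _ _ _
        map_smul' := by
          intro a t
          show ∑ j, ((bN j : ↥N') : T →ₗ[A] M) (a • t j) =
            a • ∑ j, ((bN j : ↥N') : T →ₗ[A] M) (t j)
          rw [Finset.smul_sum]
          exact Finset.sum_congr rfl fun j _ => map_smul _ _ _ }
    have hπval : ∀ (b : Fin n → (Module.End A T)ᵐᵒᵖ) (t' : T),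
        ((π b : ↥N') : T →ₗ[A] M) t' = ∑ j, ((bN j : ↥N') : T →ₗ[A] M) ((b j).unop t') := by
      intro b t'
      have h1 : ((π b : ↥N') : T →ₗ[A] M) = ∑ j, ((b j • bN j : ↥N') : T →ₗ[A] M) := by
        show (N'.subtype (∑ j, b j • bN j)) = _
        rw [map_sum]
        rfl
      rw [h1, LinearMap.sum_apply]
      apply Finset.sum_congr rfl
      intro j _
      rfl
    have hcbarR : R ≤ LinearMap.ker cbar := by
      rintro _ ⟨t, rfl⟩
      rw [LinearMap.mem_ker]
      show ∑ j, ((bN j : ↥N') : T →ₗ[A] M) (∑ l, (x l j).unop (t l)) = 0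
      have h1 : ∀ j, ((bN j : ↥N') : T →ₗ[A] M) (∑ l, (x l j).unop (t l)) =
          ∑ l, ((bN j : ↥N') : T →ₗ[A] M) ((x l j).unop (t l)) := fun j => map_sum _ _ _
      rw [Finset.sum_congr rfl fun j _ => h1 j, Finset.sum_comm]
      apply Finset.sum_eq_zero
      intro l _
      have h2 : (π (x l) : T →ₗ[A] M) (t l) = ∑ j, ((bN j : ↥N') : T →ₗ[A] M) ((x l j).unop (t l)) :=
        hπval (x l) (t l)
      rw [← h2]
      have h3 : π (x l) = 0 := (bK l).2
      rw [h3]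
      rfl
    let c : W →ₗ[A] M := R.liftQ cbar hcbarR
    -- the map η̂ and η
    let ηhat : (Fin n → (Module.End A T)ᵐᵒᵖ) →ₗ[(Module.End A T)ᵐᵒᵖ] (T →ₗ[A] W) :=
      { toFun := fun b => R.mkQ ∘ₗ (LinearMap.pi (fun j => (b j).unop))
        map_add' := by
          intro b c
          apply LinearMap.ext
          intro t
          show R.mkQ _ = R.mkQ _ + R.mkQ _
          rw [← map_add]
          rfl
        map_smul' := by
          intro cc b
          apply LinearMap.ext
          intro t
          rfl }
    have hKη : K ≤ LinearMap.ker ηhat := by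
      intro b hb
      have hrepr : b = ∑ l, (bK.repr ⟨b, hb⟩ l) • x l := by
        have h0 := bK.sum_repr ⟨b, hb⟩
        calc b = ((⟨b, hb⟩ : ↥K) : Fin n → (Module.End A T)ᵐᵒᵖ) := rfl
          _ = ((∑ l, bK.repr ⟨b, hb⟩ l • bK l : ↥K) : Fin n → (Module.End A T)ᵐᵒᵖ) := by rw [h0]
          _ = ∑ l, (bK.repr ⟨b, hb⟩ l) • x l := by
              rw [AddSubmonoidClass.coe_finset_sum]
              rfl
      rw [LinearMap.mem_ker]
      apply LinearMap.ext
      intro t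
      show R.mkQ (fun j => (b j).unop t) = 0
      rw [Submodule.mkQ_apply, Submodule.Quotient.mk_eq_zero]
      refine ⟨fun l => (bK.repr ⟨b, hb⟩ l) • t, ?_⟩
      show (fun j => ∑ l, (x l j).unop ((bK.repr ⟨b, hb⟩ l) • t)) = fun j => (b j).unop t
      funext j
      conv_rhs => rw [congrFun hrepr j]
      have h5 : ((∑ l, (bK.repr ⟨b, hb⟩ l) • x l) j).unop =
          ∑ l, (bK.repr ⟨b, hb⟩ l) • (x l j).unop := by
        have h6 : (∑ l, (bK.repr ⟨b, hb⟩ l) • x l) j = ∑ l, (bK.repr ⟨b, hb⟩ l) • x l j := by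
          rw [Finset.sum_apply]
          rfl
        rw [h6]
        exact (map_sum (MulOpposite.opAddEquiv (α := Module.End A T)).symm _ _).trans
          (Finset.sum_congr rfl fun l _ => rfl)
      rw [h5, LinearMap.sum_apply]
      exact Finset.sum_congr rfl fun l _ => by
        rw [LinearMap.smul_apply, LinearMap.map_smul_of_tower]
    let e₁ : ((Fin n → (Module.End A T)ᵐᵒᵖ) ⧸ K) ≃ₗ[(Module.End A T)ᵐᵒᵖ] ↥N' := π.quotKerEquivOfSurjective hπsurj
    let η : ↥N' →ₗ[(Module.End A T)ᵐᵒᵖ] (T →ₗ[A] W) := (K.liftQ ηhat hKη) ∘ₗ (e₁.symm : ↥N' →ₗ[(Module.End A T)ᵐᵒᵖ] ((Fin n → (Module.End A T)ᵐᵒᵖ) ⧸ K))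
    have he₁ : ∀ b : Fin n → (Module.End A T)ᵐᵒᵖ, e₁ (K.mkQ b) = π b := fun b => rfl
    have hηπ : ∀ b : Fin n → (Module.End A T)ᵐᵒᵖ, η (π b) = ηhat b := by
      intro b
      have h1 : e₁.symm (π b) = K.mkQ b := by
        apply e₁.injective
        rw [e₁.apply_symm_apply, he₁]
      show (K.liftQ ηhat hKη) (e₁.symm (π b)) = ηhat b
      rw [h1]
      rfl
    have hcη : ∀ v : ↥N', c ∘ₗ (η v) = (v : T →ₗ[A] M) := by
      intro v
      obtain ⟨b, rfl⟩ := hπsurj v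
      rw [hηπ b]
      apply LinearMap.ext
      intro t
      exact (hπval b t).symm
    have hηinj : Function.Injective η := by
      rw [injective_iff_map_eq_zero]
      intro v hv
      have h1 : (v : T →ₗ[A] M) = 0 := by
        rw [← hcη v, hv]
        exact LinearMap.comp_zero c
      exact Subtype.ext h1
    have hextR : Ext1Vanishes A T ↥R :=
      ext1_quot ι₀ p₀ hι hp₀ hres (ext1_pow hTT m) φ.rangeRestrict φ.surjective_rangeRestrict
    have hηsurj : Function.Surjective η := by
      intro g
      -- pull back g along the projection T^n → W
      set E' : Submodule A (T × (Fin n → T)) :=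
        LinearMap.ker ((g ∘ₗ LinearMap.fst A T (Fin n → T)) -
          (R.mkQ ∘ₗ LinearMap.snd A T (Fin n → T))) with hE'def
      let fE : ↥R →ₗ[A] ↥E' := LinearMap.codRestrict E'
        ((LinearMap.inr A T (Fin n → T)) ∘ₗ R.subtype)
        (fun r => by
          simp only [hE'def, LinearMap.mem_ker, LinearMap.sub_apply, LinearMap.comp_apply,
            LinearMap.fst_apply, LinearMap.snd_apply, LinearMap.inr_apply, map_zero,
            Submodule.subtype_apply, zero_sub, neg_eq_zero]
          rw [Submodule.mkQ_apply, Submodule.Quotient.mk_eq_zero]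
          exact r.2)
      let gE : ↥E' →ₗ[A] T := (LinearMap.fst A T (Fin n → T)) ∘ₗ E'.subtype
      have hfE : Function.Injective fE := by
        intro a b hab
        have h1 : ((0 : T), (a : Fin n → T)) = ((0 : T), (b : Fin n → T)) := Subtype.ext_iff.1 hab
        exact Subtype.ext (congrArg Prod.snd h1)
      have hgE : Function.Surjective gE := by
        intro t
        obtain ⟨v, hv⟩ := R.mkQ_surjective (g t)
        refine ⟨⟨(t, v), ?_⟩, rfl⟩
        simp only [hE'def, LinearMap.mem_ker, LinearMap.sub_apply, LinearMap.comp_apply,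
          LinearMap.fst_apply, LinearMap.snd_apply, sub_eq_zero]
        exact hv.symm
      have hfgE : Function.Exact fE gE := by
        intro w
        constructor
        · intro hw
          obtain ⟨⟨t, v⟩, hmem⟩ := w
          have ht : t = 0 := hw
          subst ht
          have h1 : R.mkQ v = 0 := by
            have := hmem
            simp only [hE'def, LinearMap.mem_ker, LinearMap.sub_apply, LinearMap.comp_apply,
              LinearMap.fst_apply, LinearMap.snd_apply, map_zero, zero_sub, neg_eq_zero] at this
            exact this
          rw [Submodule.mkQ_apply, Submodule.Quotient.mk_eq_zero] at h1
          exact ⟨⟨v, h1⟩, Subtype.ext rfl⟩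
        · rintro ⟨r, rfl⟩
          rfl
      obtain ⟨s, hs⟩ := hextR ↥E' fE gE hfE hgE hfgE
      let h : T →ₗ[A] (Fin n → T) := (LinearMap.snd A T (Fin n → T)) ∘ₗ E'.subtype ∘ₗ s
      have hh : ∀ t, R.mkQ (h t) = g t := by
        intro t
        have hmem := (s t).2
        simp only [hE'def, LinearMap.mem_ker, LinearMap.sub_apply, LinearMap.comp_apply,
          LinearMap.fst_apply, LinearMap.snd_apply, sub_eq_zero] at hmem
        have hfst : ((s t : T × (Fin n → T))).1 = t := LinearMap.congr_fun hs t
        show R.mkQ ((s t : T × (Fin n → T)).2) = g t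
        rw [← hmem, hfst]
      refine ⟨π (fun j => MulOpposite.op ((LinearMap.proj j) ∘ₗ h)), ?_⟩
      rw [hηπ]
      apply LinearMap.ext
      intro t
      show R.mkQ (fun j => h t j) = g t
      rw [← hh t]
    -- assemble the inequality
    let equiv : ↥N' ≃ₗ[(Module.End A T)ᵐᵒᵖ] (T →ₗ[A] W) := LinearEquiv.ofBijective η ⟨hηinj, hηsurj⟩
    have hextW : Ext1Vanishes A T W :=
      ext1_quot ι₀ p₀ hι hp₀ hres (ext1_pow hTT n) R.mkQ R.mkQ_surjective
    have h1 : thetaDim k (Module.End A T)ᵐᵒᵖ ι' θ' e' ↥N' = thetaDim k (Module.End A T)ᵐᵒᵖ ι' θ' e' (T →ₗ[A] W) :=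
      thetaDim_congr θ' e' equiv
    have h2 : thetaDim k (Module.End A T)ᵐᵒᵖ ι' θ' e' (T →ₗ[A] W) = thetaDim k A ι θ e W := hcompat W hextW
    have h3 : thetaDim k A ι θ e W =
        thetaDim k A ι θ e ↥(LinearMap.ker c) + thetaDim k A ι θ e (W ⧸ LinearMap.ker c) :=
      thetaDim_additive θ e he (LinearMap.ker c)
    have h4 : thetaDim k A ι θ e (W ⧸ LinearMap.ker c) =
        thetaDim k A ι θ e ↥(LinearMap.range c) :=
      thetaDim_congr θ e c.quotKerEquivRange
    have h5 : thetaDim k A ι θ e ↥(LinearMap.range c) ≤ 0 := hM.2 (LinearMap.range c)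
    have h6 : thetaDim k A ι θ e ↥(LinearMap.ker c) ≤ 0 := by
      rcases subsingleton_or_nontrivial ↥(LinearMap.ker c) with hss | hnt
      · rw [thetaDim_subsingleton θ e]
      · haveI : FiniteDimensional k ↥(LinearMap.ker c) := fd_submodule _
        refine le_of_lt (hfneg ↥(LinearMap.ker c) hnt ?_)
        intro h0
        let g0 : T →ₗ[A] W := (LinearMap.ker c).subtype ∘ₗ h0
        obtain ⟨v, hv⟩ := hηsurj g0
        have hcg0 : c ∘ₗ g0 = 0 := by
          apply LinearMap.ext
          intro t
          exact (h0 t).2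
        have hv0 : (v : T →ₗ[A] M) = 0 := by
          rw [← hcη v, hv]
          exact hcg0
        have hvz : v = 0 := by
          apply Subtype.ext
          rw [hv0]
          rfl
        have : g0 = 0 := by rw [← hv, hvz, map_zero]
        apply LinearMap.ext
        intro t
        have := LinearMap.congr_fun this t
        exact Subtype.ext this
    rw [h1, h2, h3, h4]
    omega
end
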